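/- Suppose a family of nonnegative functions F_Λ satisfies the integral inequality F(Λ) ≤ ∫_Λ^{Λ₀} (λ+m)^{3-2k-z} P(log((λ+m)/m)) dλ for all Λ ∈ [0,Λ₀], where m > 0, k,z are integers with 2k+z > 4, and P is a polynomial with nonnegative coefficients. Then there exists a (possibly different) polynomial Q with nonnegative coefficients, independent of Λ and Λ₀, such that F(Λ) ≤ (Λ+m)^{4-2k-z} Q(log((Λ+m)/m)) for all Λ ∈ [0,Λ₀]. -/

import Mathlib

open Real Set Polynomial

lemma my_eval_nonneg (Q : Polynomial ℝ) (hQ : ∀ i, 0 ≤ Q.coeff i)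
    {x : ℝ} (hx : 0 ≤ x) : 0 ≤ Q.eval x := by
  rw [Polynomial.eval_eq_sum_range]
  exact Finset.sum_nonneg fun i _ => mul_nonneg (hQ i) (pow_nonneg hx i)

lemma my_iter_deriv_nonneg (P : Polynomial ℝ) (hP : ∀ i, 0 ≤ P.coeff i)
    (j : ℕ) : ∀ i, 0 ≤ (derivative^[j] P).coeff i := by
  induction j with
  | zero => exact hP
  | succ n ih =>
      intro i
      rw [Function.iterate_succ_apply', Polynomial.coeff_derivative]
      exact mul_nonneg (ih _) (by positivity)

theorem irrelevant_vertex_integral_bound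
    (m : ℝ) (hm : 0 < m) (k z : ℕ) (hkz : 4 < 2 * k + z)
    (P : Polynomial ℝ) (hP : ∀ i, 0 ≤ P.coeff i) :
    ∃ Q : Polynomial ℝ, (∀ i, 0 ≤ Q.coeff i) ∧
      ∀ (Λ₀ : ℝ) (F : ℝ → ℝ),
        (∀ Λ ∈ Icc (0 : ℝ) Λ₀, 0 ≤ F Λ) →
        (∀ Λ ∈ Icc (0 : ℝ) Λ₀,
          F Λ ≤ ∫ l in Λ..Λ₀,
            (l + m) ^ ((3 : ℤ) - 2 * k - z) * P.eval (Real.log ((l + m) / m))) →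
        ∀ Λ ∈ Icc (0 : ℝ) Λ₀,
          F Λ ≤ (Λ + m) ^ ((4 : ℤ) - 2 * k - z) * Q.eval (Real.log ((Λ + m) / m)) := by
  set c : ℝ := (2 * k + z : ℕ) - 4 with hc_def
  have hc1 : (1 : ℝ) ≤ c := by
    have h5 : (5 : ℕ) ≤ 2 * k + z := hkz
    have : (5 : ℝ) ≤ (2 * k + z : ℕ) := by exact_mod_cast h5
    rw [hc_def]; linarith
  have hc0 : 0 < c := lt_of_lt_of_le one_pos hc1
  set N : ℕ := P.natDegree with hN
  set R : Polynomial ℝ := ∑ j ∈ Finset.range (N + 1),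
      (1 / c) ^ (j + 1) • derivative^[j] P with hR
  have hRcoeff : ∀ i, 0 ≤ R.coeff i := by
    intro i
    rw [hR, Polynomial.finset_sum_coeff]
    refine Finset.sum_nonneg fun j _ => ?_
    rw [Polynomial.coeff_smul, smul_eq_mul]
    exact mul_nonneg (by positivity) (my_iter_deriv_nonneg P hP j i)
  have hkey : c • R - derivative R = P := by
    have hd : derivative R = ∑ j ∈ Finset.range (N + 1),
        (1 / c) ^ (j + 1) • derivative^[j + 1] P := by
      rw [hR, map_sum]
      refine Finset.sum_congr rfl fun j _ => ?_
      rw [Polynomial.derivative_smul, Function.iterate_succ_apply']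
    have hcR : c • R = ∑ j ∈ Finset.range (N + 1),
        (1 / c) ^ j • derivative^[j] P := by
      rw [hR, Finset.smul_sum]
      refine Finset.sum_congr rfl fun j _ => ?_
      rw [smul_smul]
      congr 1
      field_simp
      simp [pow_succ, hc0.ne']
      rw [mul_comm, mul_assoc, inv_mul_cancel₀ hc0.ne', mul_one]
    rw [hcR, hd, ← Finset.sum_sub_distrib,
      Finset.sum_range_sub' (fun j => (1 / c) ^ j • derivative^[j] P) (N + 1)]
    have hz : derivative^[N + 1] P = 0 :=
      Polynomial.iterate_derivative_eq_zero (by omega)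
    simp [hz]
  have heval : ∀ t : ℝ, c * R.eval t - (derivative R).eval t = P.eval t := by
    intro t
    have := congrArg (Polynomial.eval t) hkey
    simpa [smul_eq_mul] using this
  refine ⟨R, hRcoeff, ?_⟩
  intro Λ₀ F hF hFle Λ hΛ
  obtain ⟨hΛ0, hΛΛ₀⟩ := hΛ
  have hΛ₀0 : 0 ≤ Λ₀ := le_trans hΛ0 hΛΛ₀
  set e : ℤ := (3 : ℤ) - 2 * k - z with he_def
  set n1 : ℤ := (4 : ℤ) - 2 * k - z with hn1_def
  have hn : n1 = e + 1 := by rw [he_def, hn1_def]; ring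
  have hcn : c = -(n1 : ℝ) := by
    rw [hc_def, hn1_def]; push_cast; ring
  set G : ℝ → ℝ := fun x => -((x + m) ^ n1 * R.eval (Real.log ((x + m) / m))) with hG
  have hderiv : ∀ l ∈ uIcc Λ Λ₀,
      HasDerivAt G ((l + m) ^ e * P.eval (Real.log ((l + m) / m))) l := by
    intro l hl
    have hlm : 0 < l + m := by
      rw [uIcc_of_le hΛΛ₀] at hl
      have := hl.1; linarith
    have h1 : HasDerivAt (fun x : ℝ => x + m) 1 l := (hasDerivAt_id l).add_const m
    have h2 : HasDerivAt (fun x : ℝ => (x + m) ^ n1)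
        ((n1 : ℝ) * (l + m) ^ (n1 - 1) * 1) l :=
      by have := (hasDerivAt_zpow n1 (l + m) (Or.inl hlm.ne')).comp l h1; exact this
    have h3 : HasDerivAt (fun x : ℝ => Real.log ((x + m) / m))
        (((l + m) / m)⁻¹ * (1 / m)) l :=
      by have := (Real.hasDerivAt_log (div_ne_zero hlm.ne' hm.ne')).comp l (h1.div_const m); exact this
    have h3' : ((l + m) / m)⁻¹ * (1 / m) = 1 / (l + m) := by
      field_simp
    rw [h3'] at h3
    have h4 : HasDerivAt (fun x : ℝ => R.eval (Real.log ((x + m) / m)))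
        (R.derivative.eval (Real.log ((l + m) / m)) * (1 / (l + m))) l :=
      (R.hasDerivAt _).comp l h3
    have h5 := (h2.fun_mul h4).fun_neg
    refine h5.congr_deriv ?_
    symm
    rw [← heval (Real.log ((l + m) / m))]
    have hz1 : (l + m) ^ (n1 - 1) = (l + m) ^ e := by rw [hn]; ring_nf
    have hz2 : (l + m) ^ n1 = (l + m) ^ e * (l + m) := by
      rw [hn, zpow_add_one₀ hlm.ne']
    rw [hz1, hz2, hcn]
    field_simp
    ring
  have hcont : ContinuousOn
      (fun l => (l + m) ^ e * P.eval (Real.log ((l + m) / m))) (uIcc Λ Λ₀) := by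
    intro l hl
    have hlm : 0 < l + m := by
      rw [uIcc_of_le hΛΛ₀] at hl
      have := hl.1; linarith
    apply ContinuousAt.continuousWithinAt
    have hcadd : ContinuousAt (fun x : ℝ => x + m) l :=
      (continuous_id.add continuous_const).continuousAt
    apply ContinuousAt.mul
    · exact hcadd.zpow₀ e (Or.inl hlm.ne')
    · have hlog : ContinuousAt (fun x : ℝ => Real.log ((x + m) / m)) l :=
        (hcadd.div_const m).log (div_ne_zero hlm.ne' hm.ne')
      exact ((Polynomial.continuous P).continuousAt).comp hlog
  have hint : (∫ l in Λ..Λ₀, (l + m) ^ e * P.eval (Real.log ((l + m) / m)))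
      = G Λ₀ - G Λ :=
    intervalIntegral.integral_eq_sub_of_hasDerivAt hderiv hcont.intervalIntegrable
  have hFΛ := hFle Λ ⟨hΛ0, hΛΛ₀⟩
  rw [hint] at hFΛ
  have hsub : 0 ≤ (Λ₀ + m) ^ n1 * R.eval (Real.log ((Λ₀ + m) / m)) := by
    apply mul_nonneg
    · exact zpow_nonneg (by linarith) _
    · exact my_eval_nonneg R hRcoeff
        (Real.log_nonneg (by rw [le_div_iff₀ hm]; linarith))
  calc F Λ ≤ G Λ₀ - G Λ := hFΛ
    _ = (Λ + m) ^ n1 * R.eval (Real.log ((Λ + m) / m))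
        - (Λ₀ + m) ^ n1 * R.eval (Real.log ((Λ₀ + m) / m)) := by rw [hG]; ring
    _ ≤ (Λ + m) ^ n1 * R.eval (Real.log ((Λ + m) / m)) := by linarith
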